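/- arXiv:1304.5800 — 2 statements merged into one kernel-verified Lean document; each statement's English description precedes it below -/
import Mathlib

section
/- Let a > 0 and let A(z) = ∏_{n=0}^∞ (1 - z²/(n+a)²). Then A(z) = Γ(a)²/(Γ(a+z)Γ(a−z)), and for every nonnegative integer k, |A'(k+a)| = Γ(a)² Γ(k+1)/Γ(k+2a). -/
open Complex

open Filter Finset Topology


lemma aux_prod_reflect (k : ℕ) :
    ∏ j ∈ Finset.range k, ((j : ℂ) - k) = (-1) ^ k * (Nat.factorial k : ℂ) := by
  induction k with
  | zero => simp
  | succ k ih =>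
    rw [Finset.prod_range_succ']
    have h1 : ∀ i ∈ Finset.range k, (((i : ℕ) + 1 : ℕ) : ℂ) - ((k + 1 : ℕ) : ℂ)
        = (i : ℂ) - k := by intro i _; push_cast; ring
    rw [Finset.prod_congr rfl h1, ih]
    simp only [Nat.factorial_succ]
    push_cast
    ring

lemma aux_gamma_shift (k : ℕ) : ∀ s : ℂ, (∀ j : ℕ, j ≤ k → s + j ≠ 0) →
    Complex.Gamma (s + (k : ℂ) + 1) = (∏ j ∈ Finset.range (k + 1), (s + j)) * Complex.Gamma s := by
  induction k with
  | zero =>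
    intro s h
    have h0 : s ≠ 0 := by simpa using h 0 le_rfl
    simp [Complex.Gamma_add_one s h0]
  | succ k ih =>
    intro s h
    have h0 : s ≠ 0 := by simpa using h 0 (Nat.zero_le _)
    have key : Complex.Gamma (s + ((k : ℕ) + 1 : ℕ) + 1) = Complex.Gamma ((s + 1) + (k : ℂ) + 1) := by
      push_cast; ring_nf
    rw [key, ih (s + 1) (fun j hj => by
      have := h (j + 1) (by omega)
      push_cast at this ⊢
      intro hc; apply this; linear_combination hc)]
    rw [Complex.Gamma_add_one s h0]
    rw [Finset.prod_range_succ' (fun j : ℕ => s + j) (k + 1)]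
    have h2 : ∀ i ∈ Finset.range (k + 1), (s + ((i : ℕ) + 1 : ℕ)) = (s + 1) + i := by
      intro i _; push_cast; ring
    rw [Finset.prod_congr rfl h2]
    simp
    ring

lemma aux_deriv_rGamma (k : ℕ) :
    deriv (fun s : ℂ => (Complex.Gamma s)⁻¹) (-(k : ℂ)) = (-1) ^ k * (Nat.factorial k : ℂ) := by
  have heq : (fun s : ℂ => (Complex.Gamma s)⁻¹) =ᶠ[nhds (-(k : ℂ))]
      (fun s : ℂ => (∏ j ∈ Finset.range (k + 1), (s + j)) * (Complex.Gamma (s + (k : ℂ) + 1))⁻¹) := by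
    have hball : ∀ᶠ s : ℂ in nhds (-(k : ℂ)), dist s (-(k : ℂ)) < 1 / 2 :=
      Metric.ball_mem_nhds _ (by norm_num)
    filter_upwards [hball] with s hs
    have hnorm : ‖s + (k : ℂ)‖ < 1 / 2 := by
      rwa [Complex.dist_eq, sub_neg_eq_add] at hs
    by_cases hsk : s = -(k : ℂ)
    · subst hsk
      rw [Complex.Gamma_neg_nat_eq_zero, inv_zero]
      rw [Finset.prod_eq_zero (Finset.self_mem_range_succ k) (by ring), zero_mul]
    · have hj : ∀ j : ℕ, j ≤ k → s + j ≠ 0 := by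
        intro j hjk hc
        rcases eq_or_lt_of_le hjk with rfl | hlt
        · exact hsk (by linear_combination hc)
        · have h1 : s + (k : ℂ) = ((k : ℝ) - (j : ℝ) : ℝ) := by
            push_cast
            linear_combination hc
          rw [h1, Complex.norm_real, Real.norm_eq_abs,
            abs_of_pos (by
              have : (j : ℝ) < (k : ℝ) := by exact_mod_cast hlt
              linarith)] at hnorm
          have : (1 : ℝ) ≤ (k : ℝ) - (j : ℝ) := by
            have : (j : ℝ) + 1 ≤ (k : ℝ) := by exact_mod_cast hlt
            linarith
          linarith
      have hG1 : Complex.Gamma (s + (k : ℂ) + 1) ≠ 0 := by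
        apply Complex.Gamma_ne_zero
        intro m hc
        have h1 : s + (k : ℂ) = ((-(1 : ℝ) - m : ℝ) : ℝ) := by
          push_cast
          linear_combination hc
        rw [h1, Complex.norm_real, Real.norm_eq_abs] at hnorm
        have hm : (-(1 : ℝ) - (m : ℝ)) = -((1 : ℝ) + m) := by ring
        have h0m : (0 : ℝ) ≤ (m : ℝ) := Nat.cast_nonneg m
        rw [hm, abs_neg, abs_of_pos (by linarith)] at hnorm
        linarith
      have hprod : (∏ j ∈ Finset.range (k + 1), (s + j)) ≠ 0 :=
        Finset.prod_ne_zero_iff.mpr fun j hj' =>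
          hj j (Nat.lt_succ_iff.mp (Finset.mem_range.mp hj'))
      rw [aux_gamma_shift k s hj, mul_inv, ← mul_assoc, mul_inv_cancel₀ hprod, one_mul]
  rw [heq.deriv_eq]
  have hRdiff : DifferentiableAt ℂ (fun s : ℂ => ∏ j ∈ Finset.range k, (s + (j : ℂ))) (-(k : ℂ)) :=
    DifferentiableAt.fun_finsetProd fun j _ => (differentiable_id.add_const _).differentiableAt
  have hP : HasDerivAt (fun s : ℂ => ∏ j ∈ Finset.range (k + 1), (s + (j : ℂ)))
      (∏ j ∈ Finset.range k, ((-(k : ℂ)) + j)) (-(k : ℂ)) := by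
    have h1 := hRdiff.hasDerivAt.fun_mul ((hasDerivAt_id (-(k : ℂ))).add_const (k : ℂ))
    have h2 : (fun s : ℂ => (∏ j ∈ Finset.range k, (s + (j : ℂ))) * (s + (k : ℂ)))
        = fun s : ℂ => ∏ j ∈ Finset.range (k + 1), (s + (j : ℂ)) := by
      funext s
      rw [Finset.prod_range_succ]
    simp only [id_eq] at h1
    rw [h2] at h1
    exact h1.congr_deriv (by simp)
  have hH : HasDerivAt (fun s : ℂ => (Complex.Gamma (s + (k : ℂ) + 1))⁻¹)
      (deriv (fun s : ℂ => (Complex.Gamma s)⁻¹) ((-(k : ℂ)) + (k : ℂ) + 1) * 1) (-(k : ℂ)) :=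
    (Complex.differentiable_one_div_Gamma _).hasDerivAt.comp _
      (((hasDerivAt_id (-(k : ℂ))).add_const (k : ℂ)).add_const 1)
  have := (hP.fun_mul hH).deriv
  rw [this]
  have hval : ((-(k : ℂ)) + (k : ℂ) + 1) = 1 := by ring
  have hzero : (∏ j ∈ Finset.range (k + 1), ((-(k : ℂ)) + j)) = 0 :=
    Finset.prod_eq_zero (Finset.self_mem_range_succ k) (by ring)
  rw [hzero, hval, Complex.Gamma_one, inv_one, mul_one, zero_mul, add_zero]
  rw [← aux_prod_reflect k]
  exact Finset.prod_congr rfl fun j _ => by ring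

lemma aux_partial_prod (a : ℝ) (ha : 0 < a) (z : ℂ)
    (h1 : ∀ j : ℕ, (a : ℂ) + z + j ≠ 0) (h2 : ∀ j : ℕ, (a : ℂ) - z + j ≠ 0)
    (n : ℕ) (hn : n ≠ 0) :
    ∏ i ∈ Finset.range (n + 1), (1 - z ^ 2 / ((i : ℂ) + (a : ℂ)) ^ 2) =
      Complex.GammaSeq (a : ℂ) n ^ 2 /
        (Complex.GammaSeq ((a : ℂ) + z) n * Complex.GammaSeq ((a : ℂ) - z) n) := by
  have hc : ∀ j : ℕ, (a : ℂ) + (j : ℂ) ≠ 0 := by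
    intro j
    have : ((a : ℝ) + j) ≠ 0 := by positivity
    intro hcon
    apply this
    exact_mod_cast hcon
  have hn0 : (n : ℂ) ≠ 0 := Nat.cast_ne_zero.mpr hn
  have hfact : ((Nat.factorial n : ℕ) : ℂ) ≠ 0 := Nat.cast_ne_zero.mpr (Nat.factorial_ne_zero n)
  have hQa : (∏ j ∈ Finset.range (n + 1), ((a : ℂ) + j)) ≠ 0 :=
    Finset.prod_ne_zero_iff.mpr fun j _ => hc j
  have hQp : (∏ j ∈ Finset.range (n + 1), ((a : ℂ) + z + j)) ≠ 0 :=
    Finset.prod_ne_zero_iff.mpr fun j _ => h1 j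
  have hQm : (∏ j ∈ Finset.range (n + 1), ((a : ℂ) - z + j)) ≠ 0 :=
    Finset.prod_ne_zero_iff.mpr fun j _ => h2 j
  have hpow : (n : ℂ) ^ ((a : ℂ) + z) * (n : ℂ) ^ ((a : ℂ) - z) = ((n : ℂ) ^ (a : ℂ)) ^ 2 := by
    rw [pow_two, ← Complex.cpow_add _ _ hn0, ← Complex.cpow_add _ _ hn0]
    congr 1
    ring
  have hcp : (n : ℂ) ^ (a : ℂ) ≠ 0 := by
    intro hcon
    rcases (Complex.cpow_eq_zero_iff _ _).mp hcon with ⟨h, _⟩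
    exact hn0 h
  have hL : ∏ i ∈ Finset.range (n + 1), (1 - z ^ 2 / ((i : ℂ) + (a : ℂ)) ^ 2) =
      (∏ j ∈ Finset.range (n + 1), ((a : ℂ) + z + j)) *
        (∏ j ∈ Finset.range (n + 1), ((a : ℂ) - z + j)) /
        (∏ j ∈ Finset.range (n + 1), ((a : ℂ) + j)) ^ 2 := by
    rw [← Finset.prod_pow, ← Finset.prod_mul_distrib, ← Finset.prod_div_distrib]
    apply Finset.prod_congr rfl
    intro j _
    have hja : ((j : ℂ) + a) ≠ 0 := by rw [add_comm]; exact hc j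
    rw [show ((a : ℂ) + j) = ((j : ℂ) + a) from add_comm _ _,
      show ((a : ℂ) + z + j) * ((a : ℂ) - z + j) = ((j : ℂ) + a) ^ 2 - z ^ 2 from by ring,
      sub_div, div_self (pow_ne_zero 2 hja)]
  rw [hL, Complex.GammaSeq, Complex.GammaSeq, Complex.GammaSeq]
  rw [div_pow, div_mul_div_comm, mul_mul_mul_comm, hpow, mul_pow]
  field_simp

lemma aux_tprod (a : ℝ) (ha : 0 < a) (z : ℂ) :
    ∏' n : ℕ, (1 - z ^ 2 / ((n : ℂ) + (a : ℂ)) ^ 2) =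
      (Real.Gamma a : ℂ) ^ 2 / (Complex.Gamma ((a : ℂ) + z) * Complex.Gamma ((a : ℂ) - z)) := by
  have hc : ∀ n : ℕ, (n : ℂ) + (a : ℂ) ≠ 0 := by
    intro n hcon
    have h : ((n : ℝ) + a) ≠ 0 := by positivity
    exact h (by exact_mod_cast hcon)
  by_cases hdeg : ∃ m : ℕ, z = (m : ℂ) + (a : ℂ) ∨ z = -((m : ℂ) + (a : ℂ))
  · obtain ⟨m, hm⟩ := hdeg
    have hz2 : z ^ 2 = ((m : ℂ) + (a : ℂ)) ^ 2 := by rcases hm with h | h <;> rw [h] <;> ring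
    have hfm : (1 - z ^ 2 / ((m : ℂ) + (a : ℂ)) ^ 2) = 0 := by
      rw [hz2, div_self (pow_ne_zero 2 (hc m)), sub_self]
    have hprod0 : HasProd (fun n : ℕ => 1 - z ^ 2 / ((n : ℂ) + (a : ℂ)) ^ 2) 0 := by
      rw [HasProd]
      apply Tendsto.congr' _ tendsto_const_nhds
      filter_upwards [Filter.eventually_ge_atTop ({m} : Finset ℕ)] with S hS
      exact (Finset.prod_eq_zero (Finset.singleton_subset_iff.mp hS) hfm).symm
    rw [hprod0.tprod_eq]
    have hz : Complex.Gamma ((a : ℂ) + z) * Complex.Gamma ((a : ℂ) - z) = 0 := by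
      rcases hm with h | h
      · have : (a : ℂ) - z = -(m : ℂ) := by rw [h]; ring
        rw [this, Complex.Gamma_neg_nat_eq_zero, mul_zero]
      · have : (a : ℂ) + z = -(m : ℂ) := by rw [h]; ring
        rw [this, Complex.Gamma_neg_nat_eq_zero, zero_mul]
    rw [hz, div_zero]
  · push_neg at hdeg
    have h1 : ∀ j : ℕ, (a : ℂ) + z + j ≠ 0 := by
      intro j hcon
      exact (hdeg j).2 (by linear_combination hcon)
    have h2 : ∀ j : ℕ, (a : ℂ) - z + j ≠ 0 := by
      intro j hcon
      exact (hdeg j).1 (by linear_combination -hcon)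
    have hGp : Complex.Gamma ((a : ℂ) + z) ≠ 0 := by
      apply Complex.Gamma_ne_zero
      intro m hcon
      exact (hdeg m).2 (by linear_combination hcon)
    have hGm : Complex.Gamma ((a : ℂ) - z) ≠ 0 := by
      apply Complex.Gamma_ne_zero
      intro m hcon
      exact (hdeg m).1 (by linear_combination -hcon)
    have hne : ∀ n : ℕ, (1 - z ^ 2 / ((n : ℂ) + (a : ℂ)) ^ 2) ≠ 0 := by
      intro n h
      have h2' : z ^ 2 = ((n : ℂ) + (a : ℂ)) ^ 2 := by
        have := sub_eq_zero.mp h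
        field_simp [hc n] at this
        linear_combination -this
      have h3 : (z - ((n : ℂ) + (a : ℂ))) * (z + ((n : ℂ) + (a : ℂ))) = 0 := by
        linear_combination h2'
      rcases mul_eq_zero.mp h3 with h4 | h4
      · exact (hdeg n).1 (by linear_combination h4)
      · exact (hdeg n).2 (by linear_combination h4)
    have hnorm : ∀ n : ℕ, ‖(n : ℂ) + (a : ℂ)‖ = (n : ℝ) + a := by
      intro n
      rw [show (n : ℂ) + (a : ℂ) = (((n : ℝ) + a : ℝ) : ℂ) by push_cast; ring,
        Complex.norm_real, Real.norm_eq_abs, abs_of_pos (by positivity)]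
    have hsum : Summable (fun n : ℕ => Complex.log (1 - z ^ 2 / ((n : ℂ) + (a : ℂ)) ^ 2)) := by
      apply Summable.of_norm_bounded_eventually_nat
        (g := fun n : ℕ => (3 / 2 * ‖z‖ ^ 2) * (1 / (n : ℝ) ^ 2))
        ((Real.summable_one_div_nat_pow.mpr one_lt_two).mul_left _)
      filter_upwards [Filter.eventually_ge_atTop (2 * (⌈‖z‖⌉₊ + 1))] with n hn
      have hn1 : (1 : ℕ) ≤ n := le_trans (by omega) hn
      have hnz : (2 : ℝ) * ‖z‖ ≤ (n : ℝ) := by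
        have h1' : ‖z‖ ≤ (⌈‖z‖⌉₊ : ℝ) + 1 := le_trans (Nat.le_ceil _) (by linarith)
        have h2' : ((2 * (⌈‖z‖⌉₊ + 1) : ℕ) : ℝ) ≤ (n : ℝ) := by exact_mod_cast hn
        push_cast at h2'
        linarith
      have hnpos : (0 : ℝ) < (n : ℝ) := by exact_mod_cast hn1
      have hwnorm : ‖-(z ^ 2 / ((n : ℂ) + (a : ℂ)) ^ 2)‖ ≤ ‖z‖ ^ 2 / (n : ℝ) ^ 2 := by
        rw [norm_neg, norm_div, norm_pow, norm_pow, hnorm n]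
        gcongr
        nlinarith
      have hzn : ‖z‖ ^ 2 / (n : ℝ) ^ 2 ≤ 1 / 2 := by
        rw [div_le_iff₀ (by positivity)]
        nlinarith [norm_nonneg z]
      have hhalf : ‖-(z ^ 2 / ((n : ℂ) + (a : ℂ)) ^ 2)‖ ≤ 1 / 2 := le_trans hwnorm hzn
      have hlog := Complex.norm_log_one_add_half_le_self hhalf
      calc ‖Complex.log (1 - z ^ 2 / ((n : ℂ) + (a : ℂ)) ^ 2)‖
          = ‖Complex.log (1 + -(z ^ 2 / ((n : ℂ) + (a : ℂ)) ^ 2))‖ := by rw [sub_eq_add_neg]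
        _ ≤ 3 / 2 * ‖-(z ^ 2 / ((n : ℂ) + (a : ℂ)) ^ 2)‖ := hlog
        _ ≤ 3 / 2 * (‖z‖ ^ 2 / (n : ℝ) ^ 2) := by linarith
        _ = 3 / 2 * ‖z‖ ^ 2 * (1 / (n : ℝ) ^ 2) := by ring
    have hmult : Multipliable (fun n : ℕ => 1 - z ^ 2 / ((n : ℂ) + (a : ℂ)) ^ 2) :=
      Complex.multipliable_of_summable_log hsum
    have htend := hmult.hasProd.tendsto_prod_nat
    have hGS : Tendsto
        (fun n : ℕ => ∏ i ∈ Finset.range (n + 1), (1 - z ^ 2 / ((i : ℂ) + (a : ℂ)) ^ 2)) atTop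
        (𝓝 (Complex.Gamma (a : ℂ) ^ 2 /
          (Complex.Gamma ((a : ℂ) + z) * Complex.Gamma ((a : ℂ) - z)))) := by
      apply Tendsto.congr'
        (f₁ := fun n : ℕ => Complex.GammaSeq (a : ℂ) n ^ 2 /
          (Complex.GammaSeq ((a : ℂ) + z) n * Complex.GammaSeq ((a : ℂ) - z) n))
      · filter_upwards [Filter.eventually_ge_atTop 1] with n hn
        exact (aux_partial_prod a ha z h1 h2 n (by omega)).symm
      · exact ((Complex.GammaSeq_tendsto_Gamma (a : ℂ)).pow 2).div
          ((Complex.GammaSeq_tendsto_Gamma _).mul (Complex.GammaSeq_tendsto_Gamma _))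
          (mul_ne_zero hGp hGm)
    have h2' := htend.comp (tendsto_add_atTop_nat 1)
    have hfin := tendsto_nhds_unique h2' hGS
    rw [hfin, Complex.Gamma_ofReal]


/-- For `a > 0` and `A(z) = ∏_{n≥0} (1 - z²/(n+a)²)` one has
`A(z) = Γ(a)²/(Γ(a+z)Γ(a-z))`, and `|A'(k+a)| = Γ(a)² Γ(k+1)/Γ(k+2a)` for
every nonnegative integer `k`. -/
theorem stmt_3 (a : ℝ) (ha : 0 < a) (A : ℂ → ℂ)
    (hA : ∀ z : ℂ, A z = ∏' n : ℕ, (1 - z ^ 2 / ((n : ℂ) + (a : ℂ)) ^ 2)) :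
    (∀ z : ℂ, A z = (Real.Gamma a : ℂ) ^ 2 /
        (Complex.Gamma ((a : ℂ) + z) * Complex.Gamma ((a : ℂ) - z))) ∧
    (∀ k : ℕ, ‖deriv A ((k : ℂ) + (a : ℂ))‖ =
        Real.Gamma a ^ 2 * Real.Gamma ((k : ℝ) + 1) / Real.Gamma ((k : ℝ) + 2 * a)) := by
  have part1 : ∀ z : ℂ, A z = (Real.Gamma a : ℂ) ^ 2 /
      (Complex.Gamma ((a : ℂ) + z) * Complex.Gamma ((a : ℂ) - z)) := fun z => by
    rw [hA z]; exact aux_tprod a ha z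
  refine ⟨part1, fun k => ?_⟩
  have hAF : A = fun z => (Real.Gamma a : ℂ) ^ 2 *
      ((Complex.Gamma ((a : ℂ) + z))⁻¹ * (Complex.Gamma ((a : ℂ) - z))⁻¹) := by
    funext z
    rw [part1 z, div_eq_mul_inv, mul_inv]
  rw [hAF]
  set z₀ : ℂ := (k : ℂ) + (a : ℂ) with hz₀
  have hu : HasDerivAt (fun z : ℂ => (Complex.Gamma ((a : ℂ) + z))⁻¹)
      (deriv (fun s : ℂ => (Complex.Gamma s)⁻¹) ((a : ℂ) + z₀) * 1) z₀ :=
    (Complex.differentiable_one_div_Gamma _).hasDerivAt.comp _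
      ((hasDerivAt_id z₀).const_add (a : ℂ))
  have hv : HasDerivAt (fun z : ℂ => (Complex.Gamma ((a : ℂ) - z))⁻¹)
      (deriv (fun s : ℂ => (Complex.Gamma s)⁻¹) ((a : ℂ) - z₀) * (-1)) z₀ :=
    (Complex.differentiable_one_div_Gamma _).hasDerivAt.comp _
      ((hasDerivAt_id z₀).const_sub (a : ℂ))
  have hderiv := ((hu.fun_mul hv).const_mul ((Real.Gamma a : ℂ) ^ 2)).deriv
  rw [hderiv]
  have hpt : (a : ℂ) - z₀ = -(k : ℂ) := by rw [hz₀]; ring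
  have hv0 : (Complex.Gamma ((a : ℂ) - z₀))⁻¹ = 0 := by
    rw [hpt, Complex.Gamma_neg_nat_eq_zero, inv_zero]
  have hu0 : (Complex.Gamma ((a : ℂ) + z₀))⁻¹ = ((Real.Gamma ((k : ℝ) + 2 * a) : ℂ))⁻¹ := by
    rw [show (a : ℂ) + z₀ = (((k : ℝ) + 2 * a : ℝ) : ℂ) by rw [hz₀]; push_cast; ring,
      Complex.Gamma_ofReal]
  rw [hv0, hu0, hpt, aux_deriv_rGamma k]
  have hG2 : 0 < Real.Gamma ((k : ℝ) + 2 * a) := Real.Gamma_pos_of_pos (by positivity)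
  have hGa : 0 < Real.Gamma a := Real.Gamma_pos_of_pos ha
  simp only [mul_one, mul_zero, zero_add]
  simp only [norm_mul, norm_pow, norm_inv, Complex.norm_real, Real.norm_eq_abs, Complex.norm_natCast,
    norm_neg, norm_one, abs_of_pos hGa, abs_of_pos hG2, one_pow, one_mul, mul_one]
  rw [Real.Gamma_nat_eq_factorial k]
  field_simp
end

section
/- Suppose {tₙ} is the zero set of an entire function F of the Krein class 𝒦₁ (i.e. F is real on ℝ, has only simple real nonzero zeros tₙ, and 1/F(z) = q + ∑ₙ cₙ(1/(tₙ−z) − 1/tₙ) with cₙ = −1/F'(tₙ) and ∑ₙ |cₙ|/tₙ² < ∞). Then for every proper nonempty finite set S of additional distinct real points disjoint from {tₙ} and from 0, the function G(z) = F(z)·∏_{s∈S}(1 − z/s) is again in 𝒦₁; in particular {tₙ} ∪ S is also the zero set of a 𝒦₁ function. -/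
open Complex Filter Topology

/-- Krein's class `𝒦₁`: `F` is entire, real on `ℝ`, `F(0) ≠ 0`, all zeros of
`F` are real and simple, they form a sequence `tₙ` of nonzero reals, and `1/F`
admits the expansion `1/F(z) = q + ∑ₙ cₙ(1/(tₙ-z) - 1/tₙ)` with
`cₙ = -1/F'(tₙ)` and `∑ₙ |cₙ|/tₙ² < ∞`. -/
def KreinK1 (F : ℂ → ℂ) : Prop :=
  Differentiable ℂ F ∧ (∀ x : ℝ, (F (x : ℂ)).im = 0) ∧ F 0 ≠ 0 ∧
  (∀ z : ℂ, F z = 0 → deriv F z ≠ 0) ∧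
  ∃ t : ℕ → ℝ, (∀ n, t n ≠ 0) ∧ Function.Injective t ∧
    (∀ z : ℂ, F z = 0 ↔ ∃ n, z = (t n : ℂ)) ∧
    Summable (fun n => ‖1 / deriv F ((t n : ℂ))‖ / (t n) ^ 2) ∧
    ∃ q : ℂ, ∀ z : ℂ, (∀ n, z ≠ (t n : ℂ)) →
      1 / F z = q + ∑' n, (-1 / deriv F ((t n : ℂ))) *
        (1 / ((t n : ℂ) - z) - 1 / (t n : ℂ))


lemma abs_tendsto_atTop {G : ℂ → ℂ} (hd : Differentiable ℂ G) (h0 : G 0 ≠ 0)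
    {t : ℕ → ℝ} (hinj : Function.Injective t) (hz : ∀ n, G ((t n : ℂ)) = 0) :
    Tendsto (fun n => |t n|) atTop atTop := by
  rw [tendsto_atTop]
  intro b
  rw [← Nat.cofinite_eq_atTop, eventually_cofinite]
  by_contra hfin
  have hinf : Set.Infinite ((fun n => ((t n : ℂ))) '' {n | ¬ b ≤ |t n|}) := by
    apply Set.Infinite.image
    · intro m _ n _ hmn
      exact hinj (by simpa using hmn)
    · exact hfin
  have hsub : ((fun n => ((t n : ℂ))) '' {n | ¬ b ≤ |t n|}) ⊆ Metric.closedBall 0 |b| := by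
    rintro x ⟨n, hn, rfl⟩
    simp only [Metric.mem_closedBall, Complex.dist_eq, sub_zero, Complex.norm_real, Real.norm_eq_abs]
    have h1 : |t n| < b := lt_of_not_ge hn
    exact le_trans h1.le (le_abs_self b)
  obtain ⟨x, _, hacc⟩ := hinf.exists_accPt_of_subset_isCompact (isCompact_closedBall 0 |b|) hsub
  rw [accPt_iff_frequently] at hacc
  have hfreq : ∃ᶠ w in 𝓝[≠] x, G w = 0 := by
    rw [frequently_nhdsWithin_iff]
    apply hacc.mono
    rintro y ⟨hyx, n, _, rfl⟩
    exact ⟨hz n, hyx⟩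
  have hana : AnalyticOnNhd ℂ G Set.univ :=
    hd.differentiableOn.analyticOnNhd isOpen_univ
  have heq := hana.eqOn_zero_of_preconnected_of_frequently_eq_zero
      isPreconnected_univ (Set.mem_univ x) hfreq
  exact h0 (heq (Set.mem_univ 0))


lemma summable_term {t : ℕ → ℝ} (htend : Tendsto (fun n => |t n|) atTop atTop)
    (ht0 : ∀ n, t n ≠ 0) {c : ℕ → ℂ}
    (hsum : Summable (fun n => ‖c n‖ / (t n) ^ 2))
    (z : ℂ) (hz : ∀ n, z ≠ ((t n : ℂ))) :
    Summable (fun n => c n * (1 / ((t n : ℂ) - z) - 1 / ((t n : ℂ)))) := by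
  apply summable_of_isBigO_nat hsum
  rw [Asymptotics.isBigO_iff]
  refine ⟨2 * ‖z‖, ?_⟩
  filter_upwards [htend.eventually_ge_atTop (2 * ‖z‖),
    htend.eventually_ge_atTop 1] with n h2z h1
  have htne : ((t n : ℂ)) ≠ 0 := Complex.ofReal_ne_zero.2 (ht0 n)
  have hsub : ((t n : ℂ)) - z ≠ 0 := sub_ne_zero.2 (Ne.symm (hz n))
  have hta : (0:ℝ) < |t n| := lt_of_lt_of_le one_pos h1
  have hd : (0:ℝ) < ‖(t n:ℂ) - z‖ := norm_pos_iff.2 hsub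
  have habs : |t n| / 2 ≤ ‖(t n:ℂ) - z‖ := by
    have h1' : |t n| - ‖z‖ ≤ ‖(t n:ℂ) - z‖ := by
      simpa [Complex.norm_real] using norm_sub_norm_le ((t n : ℂ)) z
    linarith
  have hkey : c n * (1 / ((t n : ℂ) - z) - 1 / ((t n : ℂ)))
      = c n * z / (((t n:ℂ)) * ((t n:ℂ) - z)) := by
    rw [div_sub_div _ _ hsub htne, mul_div_assoc]
    congr 1
    rw [div_eq_div_iff (mul_ne_zero hsub htne) (mul_ne_zero htne hsub)]
    ring
  rw [hkey, norm_div, norm_mul, norm_mul, Complex.norm_real,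
    Real.norm_eq_abs, Real.norm_eq_abs, _root_.abs_of_nonneg (by positivity : (0:ℝ) ≤ ‖c n‖ / (t n)^2)]
  have hsq : (t n)^2 = |t n|^2 := (_root_.sq_abs _).symm
  rw [hsq, div_le_iff₀ (by positivity)]
  have hc : (0:ℝ) ≤ ‖c n‖ := norm_nonneg _
  have hzz : (0:ℝ) ≤ ‖z‖ := norm_nonneg _
  have key2 : |t n| ^ 2 ≤ 2 * (|t n| * ‖(t n:ℂ) - z‖) := by nlinarith
  have expand : 2 * ‖z‖ * (‖c n‖ / |t n| ^ 2) * (|t n| * ‖(t n:ℂ) - z‖)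
      = ‖z‖ * ‖c n‖ * ((2 * (|t n| * ‖(t n:ℂ) - z‖)) / (|t n| ^ 2)) := by
    ring
  rw [expand]
  have hge : (1:ℝ) ≤ (2 * (|t n| * ‖(t n:ℂ) - z‖)) / (|t n| ^ 2) := by
    rw [le_div_iff₀ (by positivity)]
    linarith
  have hfin := mul_le_mul_of_nonneg_left hge (mul_nonneg hzz hc)
  nlinarith [hfin]

def consSeq (s : ℝ) (t : ℕ → ℝ) : ℕ → ℝ
  | 0 => s
  | n + 1 => t n

@[simp] lemma consSeq_zero (s : ℝ) (t : ℕ → ℝ) : consSeq s t 0 = s := rfl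
@[simp] lemma consSeq_succ (s : ℝ) (t : ℕ → ℝ) (n : ℕ) : consSeq s t (n + 1) = t n := rfl

lemma alg (a b z A : ℂ) (ha : a ≠ 0) (hb : b ≠ 0) (haz : a - z ≠ 0) (hab : a - b ≠ 0)
    (hba : b - a ≠ 0) (hbz : b - z ≠ 0) (hA : A ≠ 0) :
    (-1/(A * ((b - a)/b))) * (1/(a - z) - 1/a)
    = (1/((b - z)/b)) * ((-1/A) * (1/(a-z) - 1/a))
      - (b * (1/(b-z) - 1/b)) * ((-1/A) * (1/(a-b) - 1/a)) := by
  field_simp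
  ring

lemma key_mul (G : ℂ → ℂ) (hG : KreinK1 G) (s : ℝ) (hs : s ≠ 0) (hGs : G ((s : ℂ)) ≠ 0) :
    KreinK1 (fun z => G z * (1 - z / (s : ℂ))) := by
  obtain ⟨hd, hre, h0, hsimp, t, ht0, htinj, htzero, hsum, q, hexp⟩ := hG
  set G₂ : ℂ → ℂ := fun z => G z * (1 - z / (s : ℂ)) with hG₂def
  have hsC : ((s : ℂ)) ≠ 0 := Complex.ofReal_ne_zero.2 hs
  have hfac : ∀ z : ℂ, (1 - z / (s : ℂ)) = 0 ↔ z = (s : ℂ) := by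
    intro z
    rw [sub_eq_zero, eq_comm, div_eq_one_iff_eq hsC]
  have hderiv : ∀ z : ℂ, HasDerivAt G₂ (deriv G z * (1 - z / (s:ℂ)) + G z * (-(1/(s:ℂ)))) z := by
    intro z
    have h1 : HasDerivAt (fun w : ℂ => 1 - w / (s:ℂ)) (-(1/(s:ℂ))) z := by
      simpa using (HasDerivAt.const_sub 1 ((hasDerivAt_id z).div_const (s:ℂ)))
    exact (hd z).hasDerivAt.mul h1
  have hd₂ : Differentiable ℂ G₂ := fun z => (hderiv z).differentiableAt
  have hderiv' : ∀ z, deriv G₂ z = deriv G z * (1 - z/(s:ℂ)) + G z * (-(1/(s:ℂ))) :=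
    fun z => (hderiv z).deriv
  have hGt : ∀ n, G ((t n : ℂ)) = 0 := fun n => (htzero _).2 ⟨n, rfl⟩
  have hts : ∀ n, (t n : ℂ) ≠ (s : ℂ) := fun n h => hGs (h ▸ hGt n)
  have htsR : ∀ n, t n ≠ s := fun n h => hts n (by exact_mod_cast h)
  have htend : Tendsto (fun n => |t n|) atTop atTop := abs_tendsto_atTop hd h0 htinj hGt
  have hfacn : ∀ n, (1 - (t n : ℂ)/(s:ℂ)) ≠ 0 := fun n h => hts n ((hfac _).1 h)
  have hdtn : ∀ n, deriv G₂ ((t n : ℂ)) = deriv G ((t n : ℂ)) * (1 - (t n : ℂ)/(s:ℂ)) := by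
    intro n; rw [hderiv', hGt n]; ring
  have hds : deriv G₂ ((s:ℂ)) = G ((s:ℂ)) * (-(1/(s:ℂ))) := by
    rw [hderiv', div_self hsC]; ring
  have hdGn : ∀ n, deriv G ((t n : ℂ)) ≠ 0 := fun n => hsimp _ (hGt n)
  -- summability for G₂ coefficients at the old zeros
  have hsum₂ : Summable (fun n => ‖1 / deriv G₂ ((t n : ℂ))‖ / (t n) ^ 2) := by
    apply summable_of_isBigO_nat hsum
    rw [Asymptotics.isBigO_iff]
    refine ⟨1, ?_⟩
    filter_upwards [htend.eventually_ge_atTop (2 * |s|)] with n hn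
    have hsa : (0:ℝ) < |s| := abs_pos.2 hs
    have hone : (1:ℝ) ≤ ‖1 - (t n : ℂ)/(s:ℂ)‖ := by
      have h1 : ‖(t n : ℂ)/(s:ℂ)‖ - 1 ≤ ‖(t n : ℂ)/(s:ℂ) - 1‖ := by
        simpa using norm_sub_norm_le ((t n : ℂ)/(s:ℂ)) 1
      have h2 : ‖(t n : ℂ)/(s:ℂ) - 1‖ = ‖1 - (t n : ℂ)/(s:ℂ)‖ := by
        rw [← norm_neg]; congr 1; ring
      have h3 : ‖(t n : ℂ)/(s:ℂ)‖ = |t n| / |s| := by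
        rw [norm_div, Complex.norm_real, Complex.norm_real, Real.norm_eq_abs, Real.norm_eq_abs]
      have h4 : (2:ℝ) ≤ |t n| / |s| := by
        rw [le_div_iff₀ hsa]; linarith
      rw [h3] at h1
      rw [← h2]; linarith
    rw [hdtn n, Real.norm_eq_abs, Real.norm_eq_abs, one_mul,
      _root_.abs_of_nonneg (by positivity : (0:ℝ) ≤ ‖1 / (deriv G ((t n:ℂ)) * (1 - (t n:ℂ)/(s:ℂ)))‖ / (t n)^2),
      _root_.abs_of_nonneg (by positivity : (0:ℝ) ≤ ‖1 / deriv G ((t n:ℂ))‖ / (t n)^2)]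
    have hApos : 0 < ‖deriv G ((t n:ℂ))‖ := norm_pos_iff.2 (hdGn n)
    have hle : ‖1/(deriv G ((t n:ℂ)) * (1 - (t n:ℂ)/(s:ℂ)))‖
        ≤ ‖1/deriv G ((t n:ℂ))‖ := by
      rw [norm_div, norm_div, norm_one, norm_mul]
      exact one_div_le_one_div_of_le hApos (le_mul_of_one_le_right hApos.le hone)
    have htn2 : (0:ℝ) < (t n)^2 := pow_pos (abs_pos.2 (ht0 n)) 2 |>.trans_eq (sq_abs _)
    gcongr
  refine ⟨hd₂, ?_, ?_, ?_, ?_⟩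
  · -- real on ℝ
    intro x
    have hcast : ((1:ℂ) - (x:ℂ)/(s:ℂ)) = (((1 - x/s : ℝ)):ℂ) := by push_cast; ring
    show (G (x:ℂ) * (1 - (x:ℂ)/(s:ℂ))).im = 0
    rw [hcast, Complex.mul_im, Complex.ofReal_im, hre x]
    ring
  · -- nonzero at 0
    show G 0 * (1 - 0/(s:ℂ)) ≠ 0
    simpa using h0
  · -- simple zeros
    intro z hz
    have hz' : G z * (1 - z/(s:ℂ)) = 0 := hz
    rcases mul_eq_zero.1 hz' with h | h
    · obtain ⟨n, rfl⟩ := (htzero z).1 h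
      rw [hdtn n]
      exact mul_ne_zero (hdGn n) (hfacn n)
    · rw [(hfac z).1 h, hds]
      exact mul_ne_zero hGs (by simpa using hsC)
  · -- the existential
    refine ⟨consSeq s t, ?_, ?_, ?_, ?_, q, ?_⟩
    · intro n
      cases n with
      | zero => exact hs
      | succ n => exact ht0 n
    · intro m n h
      match m, n with
      | 0, 0 => rfl
      | 0, Nat.succ n => exact absurd (h.symm : t n = s) (htsR n)
      | Nat.succ m, 0 => exact absurd (h : t m = s) (htsR m)
      | Nat.succ m, Nat.succ n => exact congrArg Nat.succ (htinj (h : t m = t n))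
    · intro z
      constructor
      · intro hz
        rcases mul_eq_zero.1 (hz : G z * (1 - z/(s:ℂ)) = 0) with h | h
        · obtain ⟨n, rfl⟩ := (htzero z).1 h
          exact ⟨n + 1, rfl⟩
        · exact ⟨0, (hfac z).1 h⟩
      · rintro ⟨n, rfl⟩
        cases n with
        | zero =>
          show G (s:ℂ) * (1 - (s:ℂ)/(s:ℂ)) = 0
          rw [div_self hsC]; ring
        | succ n =>
          show G ((t n:ℂ)) * _ = 0
          rw [hGt n, zero_mul]
    · -- summability of new coefficients
      apply (summable_nat_add_iff 1).1
      exact hsum₂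
    · -- the expansion
      intro z hz
      have hzs : z ≠ (s:ℂ) := hz 0
      have hzt : ∀ n, z ≠ ((t n : ℂ)) := fun n => hz (n + 1)
      have hfz : (1 - z/(s:ℂ)) ≠ 0 := fun h => hzs ((hfac z).1 h)
      have hszne : (s:ℂ) - z ≠ 0 := sub_ne_zero.2 (Ne.symm hzs)
      have hGz : G z ≠ 0 := fun h => by
        obtain ⟨n, rfl⟩ := (htzero z).1 h
        exact hzt n rfl
      -- old expansions
      have h1 := hexp z hzt
      have h2 := hexp (s:ℂ) (fun n => Ne.symm (hts n))
      -- summability facts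
      have habsneg : ∀ (f : ℕ → ℂ), (fun n => ‖-1 / f n‖ / (t n)^2)
          = (fun n => ‖1 / f n‖ / (t n)^2) := by
        intro f; funext n; rw [neg_div, norm_neg]
      have hsum' : Summable (fun n => ‖-1 / deriv G ((t n:ℂ))‖ / (t n)^2) := by
        rw [habsneg]; exact hsum
      have hsum₂' : Summable (fun n => ‖-1 / deriv G₂ ((t n:ℂ))‖ / (t n)^2) := by
        rw [habsneg]; exact hsum₂
      have hsumz : Summable (fun n => (-1 / deriv G ((t n:ℂ))) *
          (1 / ((t n:ℂ) - z) - 1 / ((t n:ℂ)))) := summable_term htend ht0 hsum' z hzt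
      have hsums : Summable (fun n => (-1 / deriv G ((t n:ℂ))) *
          (1 / ((t n:ℂ) - (s:ℂ)) - 1 / ((t n:ℂ)))) :=
        summable_term htend ht0 hsum' (s:ℂ) (fun n => Ne.symm (hts n))
      have hsumf1 : Summable (fun n => (-1 / deriv G₂ ((t n:ℂ))) *
          (1 / ((t n:ℂ) - z) - 1 / ((t n:ℂ)))) := summable_term htend ht0 hsum₂' z hzt
      have hsumf : Summable (fun n => (-1 / deriv G₂ ((consSeq s t n : ℂ))) *
          (1 / ((consSeq s t n:ℂ) - z) - 1 / ((consSeq s t n:ℂ)))) := by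
        apply (summable_nat_add_iff 1).1
        simpa using hsumf1
      -- pointwise identity for the tail terms
      have hterm : ∀ n, (-1 / deriv G₂ ((t n:ℂ))) * (1 / ((t n:ℂ) - z) - 1 / ((t n:ℂ)))
          = (1/(1 - z/(s:ℂ))) * ((-1 / deriv G ((t n:ℂ))) * (1 / ((t n:ℂ) - z) - 1 / ((t n:ℂ))))
            - ((s:ℂ) * (1/((s:ℂ) - z) - 1/(s:ℂ))) *
              ((-1 / deriv G ((t n:ℂ))) * (1 / ((t n:ℂ) - (s:ℂ)) - 1 / ((t n:ℂ)))) := by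
        intro n
        have htnz : ((t n:ℂ)) ≠ 0 := Complex.ofReal_ne_zero.2 (ht0 n)
        have htnzz : ((t n:ℂ)) - z ≠ 0 := sub_ne_zero.2 (Ne.symm (hzt n))
        have htns : ((t n:ℂ)) - (s:ℂ) ≠ 0 := sub_ne_zero.2 (hts n)
        have hA : deriv G ((t n:ℂ)) ≠ 0 := hdGn n
        have hsa : (s:ℂ) - (t n:ℂ) ≠ 0 := sub_ne_zero.2 (Ne.symm (hts n))
        have r1 : (1 - (t n:ℂ)/(s:ℂ)) = ((s:ℂ) - (t n:ℂ))/(s:ℂ) := by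
          rw [eq_div_iff hsC, sub_mul, one_mul, div_mul_cancel₀ _ hsC]
        have r2 : (1 - z/(s:ℂ)) = ((s:ℂ) - z)/(s:ℂ) := by
          rw [eq_div_iff hsC, sub_mul, one_mul, div_mul_cancel₀ _ hsC]
        rw [hdtn n, r1, r2]
        exact alg _ _ z _ htnz hsC htnzz htns hsa hszne hA
      -- compute the tsum
      have htsum : ∑' n, (-1 / deriv G₂ ((consSeq s t n : ℂ))) *
            (1 / ((consSeq s t n:ℂ) - z) - 1 / ((consSeq s t n:ℂ)))
          = (-1 / deriv G₂ ((s:ℂ))) * (1 / ((s:ℂ) - z) - 1 / (s:ℂ))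
            + ((1/(1 - z/(s:ℂ))) * (1 / G z - q)
              - ((s:ℂ) * (1/((s:ℂ) - z) - 1/(s:ℂ))) * (1 / G ((s:ℂ)) - q)) := by
        rw [hsumf.tsum_eq_zero_add]
        congr 1
        have : (fun n => (-1 / deriv G₂ ((consSeq s t (n+1) : ℂ))) *
            (1 / ((consSeq s t (n+1):ℂ) - z) - 1 / ((consSeq s t (n+1):ℂ))))
            = fun n => (1/(1 - z/(s:ℂ))) * ((-1 / deriv G ((t n:ℂ))) * (1 / ((t n:ℂ) - z) - 1 / ((t n:ℂ))))
            - ((s:ℂ) * (1/((s:ℂ) - z) - 1/(s:ℂ))) *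
              ((-1 / deriv G ((t n:ℂ))) * (1 / ((t n:ℂ) - (s:ℂ)) - 1 / ((t n:ℂ)))) := by
          funext n
          simpa using hterm n
        rw [this, Summable.tsum_sub (hsumz.mul_left _) (hsums.mul_left _), tsum_mul_left, tsum_mul_left]
        have e1 : ∑' n, (-1 / deriv G ((t n:ℂ))) * (1 / ((t n:ℂ) - z) - 1 / ((t n:ℂ)))
            = 1 / G z - q := by rw [h1]; ring
        have e2 : ∑' n, (-1 / deriv G ((t n:ℂ))) * (1 / ((t n:ℂ) - (s:ℂ)) - 1 / ((t n:ℂ)))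
            = 1 / G ((s:ℂ)) - q := by rw [h2]; ring
        rw [e1, e2]
      show 1 / (G z * (1 - z/(s:ℂ))) = q + _
      rw [htsum, hds]
      have hwv : (1:ℂ)/(1 - z/(s:ℂ)) = 1 + (s:ℂ) * (1/((s:ℂ) - z) - 1/(s:ℂ)) := by
        field_simp
        ring
      have hlhs : 1 / (G z * (1 - z/(s:ℂ))) = (1/(1 - z/(s:ℂ))) * (1 / G z) := by
        rw [one_div, mul_inv, mul_comm, one_div, one_div]
      have hf0 : (-1 / (G ((s:ℂ)) * (-(1/(s:ℂ))))) = (s:ℂ) * (1 / G ((s:ℂ))) := by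
        field_simp
      rw [hlhs, hf0, hwv]
      ring

/-- If `F ∈ 𝒦₁` and `S` is a nonempty finite set of real points,
none of which is `0` or a zero of `F`, then `G(z) = F(z)·∏_{s∈S}(1 - z/s)` is
again in `𝒦₁`; in particular the zero set of `G` is the zero set of `F`
together with `S`. -/
theorem stmt_8 (F : ℂ → ℂ) (hF : KreinK1 F)
    (S : Finset ℝ) (hS : S.Nonempty) (h0 : (0 : ℝ) ∉ S)
    (hdisj : ∀ s ∈ S, F ((s : ℂ)) ≠ 0) :
    KreinK1 (fun z => F z * ∏ s ∈ S, (1 - z / (s : ℂ))) ∧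
    (∀ z : ℂ, F z * ∏ s ∈ S, (1 - z / (s : ℂ)) = 0 ↔
      (F z = 0 ∨ ∃ s ∈ S, z = (s : ℂ))) := by
  constructor
  · have main : ∀ (T : Finset ℝ), (0:ℝ) ∉ T → (∀ s ∈ T, F ((s:ℂ)) ≠ 0) →
        KreinK1 (fun z => F z * ∏ s ∈ T, (1 - z / (s : ℂ))) := by
      intro T
      induction T using Finset.induction_on with
      | empty => intro _ _; simpa using hF
      | @insert a T ha ih =>
        intro h0' hd'
        have h0T : (0:ℝ) ∉ T := fun h => h0' (Finset.mem_insert_of_mem h)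
        have hdT : ∀ u ∈ T, F ((u:ℂ)) ≠ 0 := fun u hu => hd' u (Finset.mem_insert_of_mem hu)
        have hK := ih h0T hdT
        have haz : a ≠ 0 := fun h => h0' (h ▸ Finset.mem_insert_self a T)
        have haC : ((a:ℂ)) ≠ 0 := Complex.ofReal_ne_zero.2 haz
        have hGa : (fun z => F z * ∏ u ∈ T, (1 - z/(u:ℂ))) ((a:ℂ)) ≠ 0 := by
          apply mul_ne_zero (hd' a (Finset.mem_insert_self a T))
          rw [Finset.prod_ne_zero_iff]
          intro u hu h
          have huC : ((u:ℂ)) ≠ 0 := Complex.ofReal_ne_zero.2 (fun h' => h0T (h' ▸ hu))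
          rw [sub_eq_zero, eq_comm, div_eq_one_iff_eq huC] at h
          have : a = u := by exact_mod_cast h
          exact ha (this ▸ hu)
        have hres := key_mul _ hK a haz hGa
        have heq : (fun z => F z * ∏ u ∈ insert a T, (1 - z/(u:ℂ)))
            = (fun z => (F z * ∏ u ∈ T, (1 - z/(u:ℂ))) * (1 - z/(a:ℂ))) := by
          funext z; rw [Finset.prod_insert ha]; ring
        rw [heq]
        exact hres
    exact main S h0 hdisj
  · intro z
    rw [mul_eq_zero, Finset.prod_eq_zero_iff]
    constructor
    · rintro (h | ⟨s, hsS, hs0⟩)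
      · exact Or.inl h
      · refine Or.inr ⟨s, hsS, ?_⟩
        have hsC : ((s:ℂ)) ≠ 0 := Complex.ofReal_ne_zero.2 (fun h' => h0 (h' ▸ hsS))
        rw [sub_eq_zero, eq_comm, div_eq_one_iff_eq hsC] at hs0
        exact hs0
    · rintro (h | ⟨s, hsS, rfl⟩)
      · exact Or.inl h
      · refine Or.inr ⟨s, hsS, ?_⟩
        have hsC : ((s:ℂ)) ≠ 0 := Complex.ofReal_ne_zero.2 (fun h' => h0 (h' ▸ hsS))
        rw [div_self hsC, sub_self]
end
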